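/- For any generalized cardinal algebra A, the set Hom(A, ℝ⁺) of GCA homomorphisms from A to the nonnegative reals, under pointwise addition, is a cancellative generalized cardinal algebra that admits binary meets with respect to its induced order. -/

import Mathlib

/-- A generalized cardinal algebra (Tarski): a set with a partial binary `add`,
a constant `zero`, and a partial `ω`-ary `sum`, satisfying Tarski's axioms.
Partiality is encoded by definedness predicates `addDef` and `sumDef`. -/
structure GCA (α : Type*) where
  zero : α
  addDef : α → α → Prop
  add : α → α → α
  sumDef : (ℕ → α) → Prop
  sum : (ℕ → α) → α
  addDef_zero_right : ∀ a, addDef a zero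
  addDef_zero_left : ∀ a, addDef zero a
  add_zero : ∀ a, add a zero = a
  zero_add : ∀ a, add zero a = a
  sum_tail : ∀ s, sumDef s →
    sumDef (fun n => s (n + 1)) ∧ addDef (s 0) (sum (fun n => s (n + 1))) ∧
      sum s = add (s 0) (sum (fun n => s (n + 1)))
  sum_add : ∀ s t : ℕ → α, (∀ n, addDef (s n) (t n)) →
    sumDef (fun n => add (s n) (t n)) →
      sumDef s ∧ sumDef t ∧ addDef (sum s) (sum t) ∧
        sum (fun n => add (s n) (t n)) = add (sum s) (sum t)
  refinement : ∀ x y (c : ℕ → α), addDef x y → sumDef c → add x y = sum c →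
    ∃ s t : ℕ → α, sumDef s ∧ sumDef t ∧ sum s = x ∧ sum t = y ∧
      ∀ n, addDef (s n) (t n) ∧ add (s n) (t n) = c n
  remainder : ∀ s t : ℕ → α, (∀ n, addDef (t n) (s (n + 1)) ∧ s n = add (t n) (s (n + 1))) →
    ∃ c, ∀ n, sumDef (fun i => t (i + n)) ∧ addDef c (sum (fun i => t (i + n))) ∧
      s n = add c (sum (fun i => t (i + n)))

/-- The order induced by a GCA: `a ≤ b` iff `a + c = b` for some `c`. -/
def GCA.le {α : Type*} (A : GCA α) (a b : α) : Prop :=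
  ∃ c, A.addDef a c ∧ A.add a c = b

open scoped NNReal

/-- A finite measure on a GCA `A`: a homomorphism `A → ℝ⁺`, where countable
sums in `ℝ⁺ = ℝ≥0` are convergent series. -/
def GCA.IsMeasure {α : Type*} (A : GCA α) (μ : α → ℝ≥0) : Prop :=
  μ A.zero = 0 ∧
  (∀ a b, A.addDef a b → μ (A.add a b) = μ a + μ b) ∧
  (∀ s : ℕ → α, A.sumDef s → HasSum (fun n => μ (s n)) (μ (A.sum s)))

/-- An action of a group `Γ` on a GCA `A`: a group action such that each map
`a ↦ γ a` is a GCA homomorphism. -/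
def GCA.IsAction {α Γ : Type*} [Group Γ] (A : GCA α) (act : Γ → α → α) : Prop :=
  (∀ a, act 1 a = a) ∧
  (∀ γ δ a, act γ (act δ a) = act (γ * δ) a) ∧
  (∀ γ : Γ,
    act γ A.zero = A.zero ∧
    (∀ a b, A.addDef a b →
      A.addDef (act γ a) (act γ b) ∧ act γ (A.add a b) = A.add (act γ a) (act γ b)) ∧
    (∀ s : ℕ → α, A.sumDef s →
      A.sumDef (fun n => act γ (s n)) ∧ act γ (A.sum s) = A.sum (fun n => act γ (s n))))

/-- `a` and `b` are equidecomposable with respect to an action of `Γ` on a GCA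
`A` if there is a countable family `(c n)` with labels `(g n)` in `Γ` such
that `a = ∑ₙ c n` and `b = ∑ₙ (g n) • (c n)` (this is the statement
`a = ∑_γ a_γ`, `b = ∑_γ γ a_γ`, with each `γ` allowed to label several
pieces). -/
def GCA.Equidecomposable {α Γ : Type*} [Group Γ] (A : GCA α) (act : Γ → α → α)
    (a b : α) : Prop :=
  ∃ (c : ℕ → α) (g : ℕ → Γ),
    A.sumDef c ∧ A.sum c = a ∧
    A.sumDef (fun n => act (g n) (c n)) ∧ A.sum (fun n => act (g n) (c n)) = b

/-- `m` is the meet (greatest lower bound) of `a` and `b` in the order of the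
GCA `A`. -/
def GCA.IsMeet {α : Type*} (A : GCA α) (a b m : α) : Prop :=
  A.le m a ∧ A.le m b ∧ ∀ x, A.le x a → A.le x b → A.le x m

/-- The induced order on finite measures on `A`:
`μ ≤ ν` iff `μ + l = ν` for some finite measure `l`. -/
def GCA.MeasLe {α : Type*} (A : GCA α) (μ ν : α → ℝ≥0) : Prop :=
  ∃ l : α → ℝ≥0, A.IsMeasure l ∧ μ + l = ν

/-- The countable sum in `Hom(A, ℝ⁺)`: `∑ₙ s n = f` is defined iff the
pointwise sums of values converge to the values of `f`, and `f` is itself a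
homomorphism. -/
def GCA.MeasSum {α : Type*} (A : GCA α) (s : ℕ → α → ℝ≥0) (f : α → ℝ≥0) : Prop :=
  (∀ x, HasSum (fun n => s n x) (f x)) ∧ A.IsMeasure f


namespace GCA

open scoped ENNReal

variable {α : Type*} (A : GCA α)

lemma zseq_sumDef : A.sumDef (fun _ => A.zero) := by
  obtain ⟨c, hc⟩ := A.remainder (fun _ => A.zero) (fun _ => A.zero)
    (fun n => ⟨A.addDef_zero_right _, (A.add_zero _).symm⟩)
  exact (hc 0).1

lemma zseq_sum : A.sum (fun _ => A.zero) = A.zero := by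
  have hz := zseq_sumDef A
  obtain ⟨s, t, hs, ht, hss, hts, hst⟩ :=
    A.refinement (A.sum fun _ => A.zero) A.zero (fun _ => A.zero)
      (A.addDef_zero_right _) hz (A.add_zero _)
  have heq : (fun n => A.add (t n) A.zero) = t := funext fun n => A.add_zero _
  have h2 := A.sum_add t (fun _ => A.zero) (fun _ => A.addDef_zero_right _)
    (by rw [heq]; exact ht)
  have h3 := h2.2.2.2
  rw [heq, hts] at h3
  -- h3 : A.zero = A.add A.zero (A.sum fun _ => A.zero)
  rw [A.zero_add] at h3
  exact h3.symm

/-- The sequence `(a, b, 0, 0, ...)`. -/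
def pSeq (a b : α) : ℕ → α := fun n => match n with
  | 0 => a
  | 1 => b
  | _ => A.zero

lemma pSeq_spec {a b : α} (h : A.addDef a b) :
    A.sumDef (A.pSeq a b) ∧ A.sum (A.pSeq a b) = A.add a b := by
  have hrem : ∀ n, A.addDef (A.pSeq a b n)
      ((fun n => match n with | 0 => A.add a b | 1 => b | _ => A.zero) (n + 1)) ∧
      (fun n => match n with | 0 => A.add a b | 1 => b | _ => A.zero) n =
        A.add (A.pSeq a b n)
          ((fun n => match n with | 0 => A.add a b | 1 => b | _ => A.zero) (n + 1)) := by
    intro n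
    rcases n with _ | _ | n
    · exact ⟨h, rfl⟩
    · exact ⟨A.addDef_zero_right b, (A.add_zero b).symm⟩
    · exact ⟨A.addDef_zero_right A.zero, (A.add_zero A.zero).symm⟩
  obtain ⟨c, hc⟩ := A.remainder (fun n => match n with | 0 => A.add a b | 1 => b | _ => A.zero) (A.pSeq a b) hrem
  have hd : A.sumDef (A.pSeq a b) := (hc 0).1
  refine ⟨hd, ?_⟩
  have h1 := A.sum_tail _ hd
  have htail : (fun n => A.pSeq a b (n + 1)) = A.pSeq b A.zero := by
    funext n; rcases n with _ | _ | n <;> rfl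
  have hd2 : A.sumDef (A.pSeq b A.zero) := htail ▸ h1.1
  have h2 := A.sum_tail _ hd2
  have htail2 : (fun n => A.pSeq b A.zero (n + 1)) = fun _ => A.zero := by
    funext n; rcases n with _ | n <;> rfl
  have hsum2 : A.sum (A.pSeq b A.zero) = b := by
    rw [h2.2.2, htail2, zseq_sum, A.add_zero]; rfl
  rw [h1.2.2, htail, hsum2]; rfl

lemma isMeasure_tsum (s : ℕ → α → ℝ≥0) (hs : ∀ n, A.IsMeasure (s n))
    (hsum : ∀ x, Summable fun n => s n x) :
    A.MeasSum s (fun x => ∑' n, s n x) := by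
  refine ⟨fun x => (hsum x).hasSum, ?_, ?_, ?_⟩
  · show (∑' n, s n A.zero) = 0
    have h0 : (fun n => s n A.zero) = fun _ => (0 : ℝ≥0) := funext fun n => (hs n).1
    rw [h0, tsum_zero]
  · intro a b hab
    show (∑' n, s n (A.add a b)) = (∑' n, s n a) + ∑' n, s n b
    have h1 : (fun n => s n (A.add a b)) = fun n => s n a + s n b :=
      funext fun n => (hs n).2.1 a b hab
    rw [h1, Summable.tsum_add (hsum a) (hsum b)]
  · intro c hc
    have key : ∑' k, (↑(∑' n, s n (c k)) : ℝ≥0∞) =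
        (↑(∑' n, s n (A.sum c)) : ℝ≥0∞) := by
      calc ∑' k, (↑(∑' n, s n (c k)) : ℝ≥0∞)
          = ∑' k, ∑' n, (s n (c k) : ℝ≥0∞) :=
            tsum_congr fun k => ENNReal.coe_tsum (hsum (c k))
        _ = ∑' n, ∑' k, (s n (c k) : ℝ≥0∞) := ENNReal.tsum_comm
        _ = ∑' n, (s n (A.sum c) : ℝ≥0∞) :=
            tsum_congr fun n => ENNReal.tsum_coe_eq ((hs n).2.2 c hc)
        _ = _ := (ENNReal.coe_tsum (hsum (A.sum c))).symm
    have h2 := ENNReal.summable.hasSum (f := fun k => (↑(∑' n, s n (c k)) : ℝ≥0∞))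
    rw [key] at h2
    exact ENNReal.hasSum_coe.mp h2

lemma isMeasure_sub {μ ν : α → ℝ≥0} (hμ : A.IsMeasure μ) (hν : A.IsMeasure ν)
    (hle : ∀ x, ν x ≤ μ x) : A.IsMeasure (μ - ν) := by
  refine ⟨?_, ?_, ?_⟩
  · show μ A.zero - ν A.zero = 0
    rw [hμ.1, hν.1, tsub_zero]
  · intro a b hab
    show μ (A.add a b) - ν (A.add a b) = (μ a - ν a) + (μ b - ν b)
    have h1 := hμ.2.1 a b hab
    have h2 := hν.2.1 a b hab
    apply NNReal.coe_injective
    rw [NNReal.coe_add, NNReal.coe_sub (hle _), NNReal.coe_sub (hle a),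
      NNReal.coe_sub (hle b), h1, h2, NNReal.coe_add, NNReal.coe_add]
    ring
  · intro c hc
    have h1 := hμ.2.2 c hc
    have h2 := hν.2.2 c hc
    have h3 := (NNReal.hasSum_coe.2 h1).sub (NNReal.hasSum_coe.2 h2)
    have h4 : HasSum (fun n => μ (c n) - ν (c n)) (μ (A.sum c) - ν (A.sum c)) := by
      rw [← NNReal.hasSum_coe]
      have hfn : (fun n => ((μ (c n) - ν (c n) : ℝ≥0) : ℝ)) =
          fun n => ((μ (c n) : ℝ) - ν (c n)) :=
        funext fun n => NNReal.coe_sub (hle (c n))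
      rw [hfn, NNReal.coe_sub (hle (A.sum c))]
      exact h3
    exact h4

lemma measLe_of_le {μ ν : α → ℝ≥0} (hμ : A.IsMeasure μ) (hν : A.IsMeasure ν)
    (hle : ∀ x, ν x ≤ μ x) : A.MeasLe ν μ :=
  ⟨μ - ν, isMeasure_sub A hμ hν hle, funext fun x => add_tsub_cancel_of_le (hle x)⟩

lemma hasSum_pair' {f : ℕ → ℝ≥0} {x y : ℝ≥0} (h0 : f 0 = x) (h1 : f 1 = y)
    (h2 : ∀ n, f (n + 2) = 0) : HasSum f (x + y) := by
  have ha : HasSum (fun n : ℕ => if n = 0 then x else 0) x := hasSum_ite_eq 0 x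
  have hb : HasSum (fun n : ℕ => if n = 1 then y else 0) y := hasSum_ite_eq 1 y
  have hab := ha.add hb
  convert hab using 1
  funext n
  rcases n with _ | _ | n <;> simp [h0, h1, h2]

/-- The set of values `μ b + ν c` over decompositions `a = b + c`. -/
def mSet (μ ν : α → ℝ≥0) (a : α) : Set ℝ≥0 :=
  {r | ∃ b c, A.addDef b c ∧ A.add b c = a ∧ r = μ b + ν c}

/-- The candidate meet of two measures. -/
noncomputable def meetFn (μ ν : α → ℝ≥0) (a : α) : ℝ≥0 :=
  sInf (A.mSet μ ν a)

lemma mSet_nonempty (μ ν : α → ℝ≥0) (a : α) : (A.mSet μ ν a).Nonempty :=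
  ⟨μ a + ν A.zero, a, A.zero, A.addDef_zero_right a, A.add_zero a, rfl⟩

lemma meetFn_le_mem (μ ν : α → ℝ≥0) {a b c : α} (h : A.addDef b c) (h2 : A.add b c = a) :
    A.meetFn μ ν a ≤ μ b + ν c :=
  csInf_le (OrderBot.bddBelow _) ⟨b, c, h, h2, rfl⟩

lemma meetFn_le_left (μ ν : α → ℝ≥0) (hν : A.IsMeasure ν) (a : α) :
    A.meetFn μ ν a ≤ μ a := by
  have h := A.meetFn_le_mem μ ν (A.addDef_zero_right a) (A.add_zero a)
  rwa [hν.1, _root_.add_zero] at h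

lemma meetFn_le_right (μ ν : α → ℝ≥0) (hμ : A.IsMeasure μ) (a : α) :
    A.meetFn μ ν a ≤ ν a := by
  have h := A.meetFn_le_mem μ ν (A.addDef_zero_left a) (A.zero_add a)
  rwa [hμ.1, _root_.zero_add] at h

lemma meetFn_zero (μ ν : α → ℝ≥0) (hμ : A.IsMeasure μ) (hν : A.IsMeasure ν) :
    A.meetFn μ ν A.zero = 0 := by
  refine le_antisymm ?_ zero_le
  exact (A.meetFn_le_left μ ν hν A.zero).trans_eq hμ.1

lemma meetFn_hasSum (μ ν : α → ℝ≥0) (hμ : A.IsMeasure μ) (hν : A.IsMeasure ν)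
    {c : ℕ → α} (hc : A.sumDef c) :
    HasSum (fun n => A.meetFn μ ν (c n)) (A.meetFn μ ν (A.sum c)) := by
  have hsummable : Summable (fun n => A.meetFn μ ν (c n)) :=
    NNReal.summable_of_le (fun n => A.meetFn_le_left μ ν hν (c n)) (hμ.2.2 c hc).summable
  have hub : ∑' n, A.meetFn μ ν (c n) ≤ A.meetFn μ ν (A.sum c) := by
    apply le_csInf (A.mSet_nonempty μ ν _)
    rintro r ⟨x, y, hxy, hadd, rfl⟩
    obtain ⟨s, t, hs, ht, hsx, hty, hstc⟩ := A.refinement x y c hxy hc hadd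
    have hms := hμ.2.2 s hs
    have hmt := hν.2.2 t ht
    rw [hsx] at hms
    rw [hty] at hmt
    calc ∑' n, A.meetFn μ ν (c n) ≤ ∑' n, (μ (s n) + ν (t n)) := by
          refine Summable.tsum_le_tsum (fun n => ?_) hsummable (hms.summable.add hmt.summable)
          exact A.meetFn_le_mem μ ν (hstc n).1 (hstc n).2
      _ = μ x + ν y := by
          rw [Summable.tsum_add hms.summable hmt.summable, hms.tsum_eq, hmt.tsum_eq]
  have hlb : A.meetFn μ ν (A.sum c) ≤ ∑' n, A.meetFn μ ν (c n) := by
    apply le_of_forall_pos_le_add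
    intro ε hε
    have h21 : (2 : ℝ≥0)⁻¹ < 1 := by
      rw [← NNReal.coe_lt_coe]; push_cast; norm_num
    have hchoice : ∀ n, ∃ b d, A.addDef b d ∧ A.add b d = c n ∧
        μ b + ν d < A.meetFn μ ν (c n) + ε * 2⁻¹ ^ (n + 1) := by
      intro n
      have hpos : (0 : ℝ≥0) < ε * 2⁻¹ ^ (n + 1) := by positivity
      have hlt : sInf (A.mSet μ ν (c n)) < A.meetFn μ ν (c n) + ε * 2⁻¹ ^ (n + 1) :=
        lt_add_of_pos_right _ hpos
      obtain ⟨r, hrmem, hrlt⟩ := exists_lt_of_csInf_lt (A.mSet_nonempty μ ν _) hlt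
      obtain ⟨b, d, h1, h2, rfl⟩ := hrmem
      exact ⟨b, d, h1, h2, hrlt⟩
    choose x y hxy hadd hlt using hchoice
    have heq : (fun n => A.add (x n) (y n)) = c := funext hadd
    obtain ⟨hsx, hsy, haddxy, hsum_eq⟩ := A.sum_add x y hxy (heq ▸ hc)
    rw [heq] at hsum_eq
    have hmx := hμ.2.2 x hsx
    have hmy := hν.2.2 y hsy
    have hgeo : Summable (fun n : ℕ => (2 : ℝ≥0)⁻¹ ^ (n + 1)) :=
      NNReal.summable_nat_add _ (NNReal.summable_geometric h21) 1
    have hgeo' : Summable (fun n : ℕ => ε * 2⁻¹ ^ (n + 1)) := hgeo.mul_left ε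
    have hgeo1 : ∑' n : ℕ, (2 : ℝ≥0)⁻¹ ^ (n + 1) = 1 := by
      have hh : ∀ n : ℕ, (2 : ℝ≥0)⁻¹ ^ (n + 1) = 2⁻¹ * 2⁻¹ ^ n := by
        intro n; rw [pow_succ]; ring
      have hhalf : (1 - 2⁻¹ : ℝ≥0) = 2⁻¹ := by
        apply NNReal.coe_injective
        rw [NNReal.coe_sub h21.le]
        norm_num
      calc ∑' n : ℕ, (2 : ℝ≥0)⁻¹ ^ (n + 1) = ∑' n : ℕ, 2⁻¹ * 2⁻¹ ^ n := tsum_congr hh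
        _ = 2⁻¹ * ∑' n : ℕ, (2 : ℝ≥0)⁻¹ ^ n := NNReal.tsum_mul_left _ _
        _ = 2⁻¹ * (1 - 2⁻¹ : ℝ≥0)⁻¹ := by rw [tsum_geometric_nnreal h21]
        _ = 1 := by rw [hhalf]; norm_num
    calc A.meetFn μ ν (A.sum c) ≤ μ (A.sum x) + ν (A.sum y) :=
          A.meetFn_le_mem μ ν haddxy hsum_eq.symm
      _ = ∑' n, (μ (x n) + ν (y n)) := by
          rw [Summable.tsum_add hmx.summable hmy.summable, hmx.tsum_eq, hmy.tsum_eq]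
      _ ≤ ∑' n, (A.meetFn μ ν (c n) + ε * 2⁻¹ ^ (n + 1)) := by
          refine Summable.tsum_le_tsum (fun n => (hlt n).le) (hmx.summable.add hmy.summable)
            (hsummable.add hgeo')
      _ = (∑' n, A.meetFn μ ν (c n)) + ε * ∑' n : ℕ, (2 : ℝ≥0)⁻¹ ^ (n + 1) := by
          rw [Summable.tsum_add hsummable hgeo', NNReal.tsum_mul_left]
      _ = (∑' n, A.meetFn μ ν (c n)) + ε := by rw [hgeo1, mul_one]
  have heq : ∑' n, A.meetFn μ ν (c n) = A.meetFn μ ν (A.sum c) := le_antisymm hub hlb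
  exact heq ▸ hsummable.hasSum

lemma meetFn_add (μ ν : α → ℝ≥0) (hμ : A.IsMeasure μ) (hν : A.IsMeasure ν)
    {a b : α} (hab : A.addDef a b) :
    A.meetFn μ ν (A.add a b) = A.meetFn μ ν a + A.meetFn μ ν b := by
  obtain ⟨hd, hsum⟩ := A.pSeq_spec hab
  have h1 := A.meetFn_hasSum μ ν hμ hν hd
  rw [hsum] at h1
  have h2 : HasSum (fun n => A.meetFn μ ν (A.pSeq a b n))
      (A.meetFn μ ν a + A.meetFn μ ν b) :=
    hasSum_pair' rfl rfl (fun n => A.meetFn_zero μ ν hμ hν)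
  exact h1.unique h2

lemma isMeasure_meetFn (μ ν : α → ℝ≥0) (hμ : A.IsMeasure μ) (hν : A.IsMeasure ν) :
    A.IsMeasure (A.meetFn μ ν) :=
  ⟨A.meetFn_zero μ ν hμ hν, fun _ _ hab => A.meetFn_add μ ν hμ hν hab,
    fun _ hc => A.meetFn_hasSum μ ν hμ hν hc⟩

lemma le_meetFn (μ ν : α → ℝ≥0) {a : α} {q : ℝ≥0}
    (h : ∀ b c, A.addDef b c → A.add b c = a → q ≤ μ b + ν c) :
    q ≤ A.meetFn μ ν a := by
  apply le_csInf (A.mSet_nonempty μ ν a)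
  rintro r ⟨b, c, hbc, hadd, rfl⟩
  exact h b c hbc hadd

lemma meas_refinement (μ ν : α → ℝ≥0) (c : ℕ → α → ℝ≥0) (f : α → ℝ≥0)
    (hμ : A.IsMeasure μ) (hν : A.IsMeasure ν) (hc : ∀ n, A.IsMeasure (c n))
    (hcf : A.MeasSum c f) (hf : μ + ν = f) :
    ∃ s t : ℕ → α → ℝ≥0, (∀ n, A.IsMeasure (s n) ∧ A.IsMeasure (t n)) ∧
      A.MeasSum s μ ∧ A.MeasSum t ν ∧ ∀ n, c n = s n + t n := by
  have hcs : ∀ x, Summable fun n => c n x := fun x => (hcf.1 x).summable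
  set T : ℕ → α → ℝ≥0 := fun n x => ∑' k, c (k + n) x with hT_def
  have hTmeas : ∀ n, A.IsMeasure (T n) := fun n =>
    (A.isMeasure_tsum (fun k => c (k + n)) (fun k => hc (k + n))
      (fun x => NNReal.summable_nat_add _ (hcs x) n)).2
  have hT_split : ∀ n x, T n x = c n x + T (n + 1) x := by
    intro n x
    have h1 := NNReal.sum_add_tsum_nat_add (f := fun k => c (k + n) x) 1
      (NNReal.summable_nat_add _ (hcs x) n)
    simp only [Finset.sum_range_one] at h1
    have h2 : (fun i : ℕ => c (i + 1 + n) x) = fun i : ℕ => c (i + (n + 1)) x := by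
      funext i; congr 1; omega
    show (∑' k, c (k + n) x) = c n x + ∑' k, c (k + (n + 1)) x
    rw [h1, h2, Nat.zero_add]
  have hT0 : ∀ x, T 0 x = f x := by
    intro x
    show (∑' k, c (k + 0) x) = f x
    exact (hcf.1 x).tsum_eq
  set r : ℕ → α → ℝ≥0 := fun n => Nat.rec μ (fun k rk => rk - A.meetFn rk (c k)) n with hr_def
  have hr_meas : ∀ n, A.IsMeasure (r n) := by
    intro n
    induction n with
    | zero => exact hμ
    | succ n ih =>
      exact A.isMeasure_sub ih (A.isMeasure_meetFn _ _ ih (hc n))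
        (fun x => A.meetFn_le_left _ _ (hc n) x)
  set sFn : ℕ → α → ℝ≥0 := fun n => A.meetFn (r n) (c n) with hsFn_def
  have hs_meas : ∀ n, A.IsMeasure (sFn n) := fun n =>
    A.isMeasure_meetFn _ _ (hr_meas n) (hc n)
  have hsr : ∀ n x, sFn n x ≤ r n x := fun n x => A.meetFn_le_left _ _ (hc n) x
  have hsc : ∀ n x, sFn n x ≤ c n x := fun n x => A.meetFn_le_right _ _ (hr_meas n) x
  have hrT : ∀ n x, r n x ≤ T n x := by
    intro n
    induction n with
    | zero =>
      intro x
      rw [hT0 x, ← congrFun hf x]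
      exact le_add_right le_rfl
    | succ n ih =>
      intro x
      show r n x - sFn n x ≤ T (n + 1) x
      rw [tsub_le_iff_right]
      have hkey : r n x - T (n + 1) x ≤ sFn n x := by
        apply A.le_meetFn
        intro b d hbd hadd
        rw [tsub_le_iff_right]
        have h1 : r n x = r n b + r n d := by rw [← hadd]; exact (hr_meas n).2.1 b d hbd
        have h2 : T (n + 1) d ≤ T (n + 1) x := by
          have h3 := (hTmeas (n + 1)).2.1 b d hbd
          rw [hadd] at h3
          rw [h3]; exact le_add_self
        calc r n x = r n b + r n d := h1
          _ ≤ r n b + (c n d + T (n + 1) d) := by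
              exact add_le_add le_rfl (by rw [← hT_split n d]; exact ih d)
          _ ≤ r n b + (c n d + T (n + 1) x) :=
              add_le_add le_rfl (add_le_add le_rfl h2)
          _ = r n b + c n d + T (n + 1) x := by ring
      exact (tsub_le_iff_right.mp hkey).trans_eq (add_comm _ _)
  have hpartial : ∀ n x, μ x = (∑ k ∈ Finset.range n, sFn k x) + r n x := by
    intro n x
    induction n with
    | zero => simp only [Finset.range_zero, Finset.sum_empty, _root_.zero_add]; rfl
    | succ n ih =>
      rw [Finset.sum_range_succ]
      have h1 : r n x = sFn n x + r (n + 1) x := by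
        show r n x = sFn n x + (r n x - sFn n x)
        rw [add_tsub_cancel_of_le (hsr n x)]
      rw [ih, h1]; ring
  have hTtend : ∀ x, Filter.Tendsto (fun n => T n x) Filter.atTop (nhds 0) := fun x =>
    NNReal.tendsto_sum_nat_add (fun k => c k x)
  have hrtend : ∀ x, Filter.Tendsto (fun n => r n x) Filter.atTop (nhds 0) := fun x =>
    tendsto_of_tendsto_of_tendsto_of_le_of_le tendsto_const_nhds (hTtend x)
      (fun n => zero_le) (fun n => hrT n x)
  have hsum_s : ∀ x, HasSum (fun n => sFn n x) (μ x) := by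
    intro x
    rw [NNReal.hasSum_iff_tendsto_nat]
    have hps : ∀ n, ∑ k ∈ Finset.range n, sFn k x = μ x - r n x := fun n =>
      eq_tsub_of_add_eq (hpartial n x).symm
    have htend : Filter.Tendsto (fun n => μ x - r n x) Filter.atTop (nhds (μ x - 0)) :=
      Filter.Tendsto.sub tendsto_const_nhds (hrtend x)
    simp only [tsub_zero] at htend
    simpa only [hps] using htend
  refine ⟨sFn, fun n => c n - sFn n,
    fun n => ⟨hs_meas n, A.isMeasure_sub (hc n) (hs_meas n) (hsc n)⟩,
    ⟨hsum_s, hμ⟩, ⟨?_, hν⟩,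
    fun n => funext fun x => (add_tsub_cancel_of_le (hsc n x)).symm⟩
  intro x
  have h1 := NNReal.hasSum_coe.2 (hcf.1 x)
  have h2 := NNReal.hasSum_coe.2 (hsum_s x)
  have h3 := h1.sub h2
  have h4 : (fun n => ((c n x : ℝ)) - sFn n x) = fun n => ((c n x - sFn n x : ℝ≥0) : ℝ) :=
    funext fun n => (NNReal.coe_sub (hsc n x)).symm
  rw [h4] at h3
  have h5 : (f x : ℝ) - μ x = ν x := by
    rw [← congrFun hf x]
    show ((μ x + ν x : ℝ≥0) : ℝ) - μ x = ν x
    push_cast; ring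
  rw [h5] at h3
  exact NNReal.hasSum_coe.mp h3

lemma meas_remainder (s t : ℕ → α → ℝ≥0) (hs : ∀ n, A.IsMeasure (s n))
    (ht : ∀ n, A.IsMeasure (t n)) (hrec : ∀ n, s n = t n + s (n + 1)) :
    ∃ c, A.IsMeasure c ∧ ∀ n, ∃ f, A.MeasSum (fun i => t (i + n)) f ∧ s n = c + f := by
  have hrec' : ∀ n x, s n x = t n x + s (n + 1) x := fun n x => congrFun (hrec n) x
  have hpart : ∀ n m x, s n x = (∑ k ∈ Finset.range m, t (k + n) x) + s (m + n) x := by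
    intro n m x
    induction m with
    | zero => simp
    | succ m ih =>
      have hidx : m + 1 + n = m + n + 1 := by omega
      rw [Finset.sum_range_succ, hidx, ih, hrec' (m + n) x]; ring
  have ht_sum : ∀ n x, Summable fun k => t (k + n) x := by
    intro n x
    apply NNReal.summable_of_sum_range_le (c := s n x)
    intro m
    rw [hpart n m x]
    exact le_add_right le_rfl
  set F : ℕ → α → ℝ≥0 := fun n x => ∑' k, t (k + n) x with hF_def
  have hFmeas : ∀ n, A.MeasSum (fun i => t (i + n)) (F n) := fun n =>
    A.isMeasure_tsum (fun k => t (k + n)) (fun k => ht (k + n)) (fun x => ht_sum n x)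
  have hF_split : ∀ n x, F n x = t n x + F (n + 1) x := by
    intro n x
    have h1 := NNReal.sum_add_tsum_nat_add (f := fun k => t (k + n) x) 1 (ht_sum n x)
    simp only [Finset.sum_range_one] at h1
    have h2 : (fun i : ℕ => t (i + 1 + n) x) = fun i : ℕ => t (i + (n + 1)) x := by
      funext i; congr 1; omega
    show (∑' k, t (k + n) x) = t n x + ∑' k, t (k + (n + 1)) x
    rw [h1, h2, Nat.zero_add]
  have hFs : ∀ n x, F n x ≤ s n x := by
    intro n x
    apply NNReal.tsum_le_of_sum_range_le
    intro m
    rw [hpart n m x]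
    exact le_add_right le_rfl
  have hclaim : ∀ n x, s n x = (s 0 x - F 0 x) + F n x := by
    intro n x
    induction n with
    | zero => exact (tsub_add_cancel_of_le (hFs 0 x)).symm
    | succ n ih =>
      have h3 : t n x + s (n + 1) x = t n x + ((s 0 x - F 0 x) + F (n + 1) x) := by
        rw [← hrec' n x, ih, hF_split n x]; ring
      exact add_left_cancel h3
  exact ⟨s 0 - F 0, A.isMeasure_sub (hs 0) (hFmeas 0).2 (hFs 0),
    fun n => ⟨F n, hFmeas n, funext fun x => hclaim n x⟩⟩

end GCA

/-- For any GCA `A`, the set `Hom(A, ℝ⁺)` of GCA homomorphisms from `A` to the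
nonnegative reals, under pointwise addition, is a cancellative GCA admitting
binary meets for its induced order: it is closed under pointwise addition,
satisfies Tarski's axioms (in particular refinement and remainder for the
countable sums described by `GCA.MeasSum`), is cancellative, and any two
finite measures have a meet. -/
theorem GCA.hom_nnreal_cancellative_gca_with_meets {α : Type*} (A : GCA α) :
    -- closed under pointwise addition, with identity 0
    (∀ μ ν, A.IsMeasure μ → A.IsMeasure ν → A.IsMeasure (μ + ν)) ∧
    A.IsMeasure (0 : α → ℝ≥0) ∧
    -- axiom 1
    (∀ (s : ℕ → α → ℝ≥0) (f : α → ℝ≥0), (∀ n, A.IsMeasure (s n)) →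
      A.MeasSum s f →
      ∃ g, A.MeasSum (fun n => s (n + 1)) g ∧ f = s 0 + g) ∧
    -- axiom 2
    (∀ (s t : ℕ → α → ℝ≥0) (f : α → ℝ≥0), (∀ n, A.IsMeasure (s n)) →
      (∀ n, A.IsMeasure (t n)) → A.MeasSum (fun n => s n + t n) f →
      ∃ g h, A.MeasSum s g ∧ A.MeasSum t h ∧ f = g + h) ∧
    -- cancellativity
    (∀ μ ν, A.IsMeasure μ → A.IsMeasure ν → μ + ν = μ → ν = 0) ∧
    -- binary meets
    (∀ μ ν, A.IsMeasure μ → A.IsMeasure ν →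
      ∃ ρ, A.IsMeasure ρ ∧ A.MeasLe ρ μ ∧ A.MeasLe ρ ν ∧
        ∀ σ, A.IsMeasure σ → A.MeasLe σ μ → A.MeasLe σ ν → A.MeasLe σ ρ) ∧
    -- refinement
    (∀ (μ ν : α → ℝ≥0) (c : ℕ → α → ℝ≥0) (f : α → ℝ≥0),
      A.IsMeasure μ → A.IsMeasure ν → (∀ n, A.IsMeasure (c n)) →
      A.MeasSum c f → μ + ν = f →
      ∃ s t : ℕ → α → ℝ≥0, (∀ n, A.IsMeasure (s n) ∧ A.IsMeasure (t n)) ∧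
        A.MeasSum s μ ∧ A.MeasSum t ν ∧ ∀ n, c n = s n + t n) ∧
    -- remainder
    (∀ s t : ℕ → α → ℝ≥0, (∀ n, A.IsMeasure (s n)) → (∀ n, A.IsMeasure (t n)) →
      (∀ n, s n = t n + s (n + 1)) →
      ∃ c, A.IsMeasure c ∧ ∀ n, ∃ f, A.MeasSum (fun i => t (i + n)) f ∧
        s n = c + f) := by
  refine ⟨?_, ?_, ?_, ?_, ?_, ?_, ?_, ?_⟩
  · intro μ ν hμ hν
    refine ⟨?_, ?_, ?_⟩
    · show μ A.zero + ν A.zero = 0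
      rw [hμ.1, hν.1, _root_.add_zero]
    · intro a b hab
      show μ (A.add a b) + ν (A.add a b) = (μ a + ν a) + (μ b + ν b)
      rw [hμ.2.1 a b hab, hν.2.1 a b hab]; ring
    · intro s hs
      exact (hμ.2.2 s hs).add (hν.2.2 s hs)
  · exact ⟨rfl, fun a b _ => by simp, fun s _ => hasSum_zero⟩
  · intro s f hs hsf
    refine ⟨fun x => ∑' n, s (n + 1) x,
      A.isMeasure_tsum (fun n => s (n + 1)) (fun n => hs (n + 1))
        (fun x => NNReal.summable_nat_add _ (hsf.1 x).summable 1), ?_⟩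
    funext x
    have h1 := NNReal.sum_add_tsum_nat_add (f := fun n => s n x) 1 (hsf.1 x).summable
    simp only [Finset.sum_range_one] at h1
    show f x = s 0 x + ∑' n, s (n + 1) x
    rw [← (hsf.1 x).tsum_eq, h1]
  · intro s t f hs ht hstf
    have hsum : ∀ x, Summable fun n => s n x + t n x := fun x => (hstf.1 x).summable
    have hss : ∀ x, Summable fun n => s n x := fun x =>
      NNReal.summable_of_le (fun n => le_add_right le_rfl) (hsum x)
    have hts : ∀ x, Summable fun n => t n x := fun x =>
      NNReal.summable_of_le (fun n => le_add_self) (hsum x)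
    refine ⟨fun x => ∑' n, s n x, fun x => ∑' n, t n x,
      A.isMeasure_tsum s hs hss, A.isMeasure_tsum t ht hts, ?_⟩
    funext x
    show f x = (∑' n, s n x) + ∑' n, t n x
    rw [← (hstf.1 x).tsum_eq, ← Summable.tsum_add (hss x) (hts x)]
    rfl
  · intro μ ν hμ hν h
    funext x
    show ν x = 0
    have h2 : μ x + ν x = μ x := congrFun h x
    have h3 : μ x + ν x = μ x + 0 := by rw [_root_.add_zero]; exact h2
    exact add_left_cancel h3
  · intro μ ν hμ hν
    refine ⟨A.meetFn μ ν, A.isMeasure_meetFn μ ν hμ hν,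
      A.measLe_of_le hμ (A.isMeasure_meetFn μ ν hμ hν) (A.meetFn_le_left μ ν hν),
      A.measLe_of_le hν (A.isMeasure_meetFn μ ν hμ hν) (A.meetFn_le_right μ ν hμ),
      ?_⟩
    intro σ hσ hσμ hσν
    obtain ⟨l₁, hl₁, hσl₁⟩ := hσμ
    obtain ⟨l₂, hl₂, hσl₂⟩ := hσν
    have hle : ∀ a, σ a ≤ A.meetFn μ ν a := by
      intro a
      apply A.le_meetFn
      intro b c hbc hadd
      have h1 : σ a = σ b + σ c := by rw [← hadd]; exact hσ.2.1 b c hbc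
      have h2 : σ b ≤ μ b := by
        rw [← congrFun hσl₁ b]; exact le_add_right le_rfl
      have h3 : σ c ≤ ν c := by
        rw [← congrFun hσl₂ c]; exact le_add_right le_rfl
      rw [h1]; exact add_le_add h2 h3
    exact A.measLe_of_le (A.isMeasure_meetFn μ ν hμ hν) hσ hle
  · exact fun μ ν c f hμ hν hc hcf hf => A.meas_refinement μ ν c f hμ hν hc hcf hf
  · exact fun s t hs ht hrec => A.meas_remainder s t hs ht hrec
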